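/- Let ψ : ℝ → ℝ₊ and ψ₀ : ℝⁿ → ℝ₊ be continuous, positive-definite, symmetric, and satisfy generalized homogeneity. Let G_t(θ) = α_ψ Σ_{k=1}^{t} λ^{t−k} ψ(x_kᵀθ) + α_{ψ₀} λ^t ψ₀(θ) with α_ψ, α_{ψ₀} > 0 and λ ∈ (0,1). If {x_t} is persistently exciting with respect to ψ (with horizon T and K∞ bounds α, β), then there exist time-invariant class-K∞ functions g₁, g₂ such that g₁(‖θ‖) ≤ G_t(θ) ≤ g₂(‖θ‖) for all t ∈ ℕ and θ ∈ ℝⁿ. -/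

import Mathlib

open Finset Filter

/-- A class-K∞ function: continuous on [0,∞), zero at zero, strictly increasing
on [0,∞), and tending to ∞ at ∞. -/
def ClassKInf (f : ℝ → ℝ) : Prop :=
  ContinuousOn f (Set.Ici 0) ∧ f 0 = 0 ∧ StrictMonoOn f (Set.Ici 0) ∧
    Tendsto f atTop atTop

/-- Dot product on ℝⁿ. -/
def dot {n : ℕ} (x θ : Fin n → ℝ) : ℝ := ∑ i, x i * θ i

/-- `N` is a norm on ℝⁿ. -/
def IsNorm {n : ℕ} (N : (Fin n → ℝ) → ℝ) : Prop :=
  (∀ x, 0 ≤ N x) ∧ (∀ x, N x = 0 ↔ x = 0) ∧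
    (∀ (a : ℝ) (x), N (a • x) = |a| * N x) ∧ (∀ x y, N (x + y) ≤ N x + N y)

lemma kinf_id : ClassKInf (fun s : ℝ => s) :=
  ⟨continuous_id.continuousOn, rfl, fun a _ b _ h => h, tendsto_id⟩

lemma kinf_nonneg {f : ℝ → ℝ} (hf : ClassKInf f) {s : ℝ} (hs : 0 ≤ s) : 0 ≤ f s := by
  have := hf.2.2.1.monotoneOn (Set.self_mem_Ici) hs hs
  rw [hf.2.1] at this; exact this

lemma kinf_pos {f : ℝ → ℝ} (hf : ClassKInf f) {s : ℝ} (hs : 0 < s) : 0 < f s := by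
  have := hf.2.2.1 (Set.self_mem_Ici) hs.le hs
  rw [hf.2.1] at this; exact this

lemma kinf_cmul {f : ℝ → ℝ} (hf : ClassKInf f) {c : ℝ} (hc : 0 < c) :
    ClassKInf (fun s => c * f s) := by
  refine ⟨continuousOn_const.mul hf.1, by simp [hf.2.1], fun a ha b hb hab => ?_, ?_⟩
  · exact mul_lt_mul_of_pos_left (hf.2.2.1 ha hb hab) hc
  · exact hf.2.2.2.const_mul_atTop hc

lemma kinf_comp_div {f : ℝ → ℝ} (hf : ClassKInf f) {C : ℝ} (hC : 0 < C) :
    ClassKInf (fun s => f (s / C)) := by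
  refine ⟨hf.1.comp (continuous_id.div_const C).continuousOn
      (fun s hs => div_nonneg hs hC.le), by simp [hf.2.1], fun a ha b hb hab => ?_, ?_⟩
  · exact hf.2.2.1 (div_nonneg ha hC.le) (div_nonneg hb hC.le) (by
      exact div_lt_div_of_pos_right hab hC)
  · exact hf.2.2.2.comp (tendsto_id.atTop_div_const hC)

lemma kinf_min {f g : ℝ → ℝ} (hf : ClassKInf f) (hg : ClassKInf g) :
    ClassKInf (fun s => min (f s) (g s)) := by
  refine ⟨hf.1.inf hg.1, by simp [hf.2.1, hg.2.1], fun a ha b hb hab => ?_, ?_⟩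
  · exact lt_min (lt_of_le_of_lt (min_le_left _ _) (hf.2.2.1 ha hb hab))
      (lt_of_le_of_lt (min_le_right _ _) (hg.2.2.1 ha hb hab))
  · rw [tendsto_atTop]
    intro b
    filter_upwards [tendsto_atTop.1 hf.2.2.2 b, tendsto_atTop.1 hg.2.2.2 b] with s h1 h2
    exact le_min h1 h2

lemma kinf_add_id_mono {f h : ℝ → ℝ} (hf : ClassKInf f) {c : ℝ} (hc : 0 ≤ c)
    (hhc : ContinuousOn h (Set.Ici 0)) (hh0 : h 0 = 0) (hhm : MonotoneOn h (Set.Ici 0)) :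
    ClassKInf (fun s => f s + s + c * h s) := by
  refine ⟨(hf.1.add continuous_id.continuousOn).add (continuousOn_const.mul hhc),
    by simp [hf.2.1, hh0], fun a ha b hb hab => ?_, ?_⟩
  · have h1 : f a + a < f b + b := add_lt_add (hf.2.2.1 ha hb hab) hab
    have h2 : c * h a ≤ c * h b := mul_le_mul_of_nonneg_left (hhm ha hb hab.le) hc
    show f a + a + c * h a < f b + b + c * h b
    linarith
  · have ev : ∀ᶠ s : ℝ in atTop, 0 ≤ s + c * h s := by
      filter_upwards [eventually_ge_atTop (0:ℝ)] with s hs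
      have h0 : 0 ≤ h s := by rw [← hh0]; exact hhm Set.self_mem_Ici hs hs
      have := mul_nonneg hc h0
      linarith
    have := Tendsto.atTop_add_zero_eventuallyLE hf.2.2.2 ev
    simpa [add_assoc] using this
lemma isnorm_zero {n : ℕ} {N : (Fin n → ℝ) → ℝ} (hN : IsNorm N) : N 0 = 0 :=
  (hN.2.1 0).mpr rfl

lemma isnorm_pos {n : ℕ} {N : (Fin n → ℝ) → ℝ} (hN : IsNorm N) {x : Fin n → ℝ}
    (hx : x ≠ 0) : 0 < N x :=
  lt_of_le_of_ne (hN.1 x) (fun h => hx ((hN.2.1 x).mp h.symm))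

lemma isnorm_sum {n : ℕ} {N : (Fin n → ℝ) → ℝ} (hN : IsNorm N)
    {ι : Type*} (s : Finset ι) (f : ι → (Fin n → ℝ)) :
    N (∑ i ∈ s, f i) ≤ ∑ i ∈ s, N (f i) := by
  classical
  induction s using Finset.cons_induction with
  | empty => simp [isnorm_zero hN]
  | cons a s ha ih =>
    rw [Finset.sum_cons, Finset.sum_cons]
    exact le_trans (hN.2.2.2 _ _) (add_le_add_right ih _)

lemma isnorm_equiv {n : ℕ} (hn : 0 < n) {N : (Fin n → ℝ) → ℝ} (hN : IsNorm N) :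
    ∃ c C : ℝ, 0 < c ∧ 0 < C ∧
      ∀ θ : Fin n → ℝ, c * ‖θ‖ ≤ N θ ∧ N θ ≤ C * ‖θ‖ := by
  haveI : Nonempty (Fin n) := ⟨⟨0, hn⟩⟩
  set C : ℝ := ∑ i : Fin n, N (Pi.single i 1) with hC
  have hCpos : 0 < C := by
    have h1 : N (Pi.single (⟨0, hn⟩ : Fin n) (1:ℝ)) > 0 := by
      apply isnorm_pos hN
      intro h
      have := congrFun h ⟨0, hn⟩
      simp at this
    calc (0:ℝ) < N (Pi.single (⟨0, hn⟩ : Fin n) (1:ℝ)) := h1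
      _ ≤ C := Finset.single_le_sum (f := fun i : Fin n => N (Pi.single i (1:ℝ))) (fun i _ => hN.1 _) (Finset.mem_univ _)
  have hupper : ∀ θ : Fin n → ℝ, N θ ≤ C * ‖θ‖ := by
    intro θ
    calc N θ = N (∑ i : Fin n, Pi.single i (θ i)) := by
          rw [Finset.univ_sum_single]
      _ ≤ ∑ i : Fin n, N (Pi.single i (θ i)) := isnorm_sum hN _ _
      _ ≤ ∑ i : Fin n, N (Pi.single i 1) * ‖θ‖ := by
          apply Finset.sum_le_sum
          intro i _
          have h1 : (Pi.single i (θ i) : Fin n → ℝ) = θ i • (Pi.single i (1:ℝ) : Fin n → ℝ) := by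
            ext j; by_cases hij : j = i <;> simp [Pi.single_apply, hij]
          rw [h1, hN.2.2.1]
          have : |θ i| ≤ ‖θ‖ := by
            have := norm_le_pi_norm θ i
            simpa [Real.norm_eq_abs] using this
          calc |θ i| * N (Pi.single i 1) ≤ ‖θ‖ * N (Pi.single i 1) :=
                mul_le_mul_of_nonneg_right this (hN.1 _)
            _ = N (Pi.single i 1) * ‖θ‖ := mul_comm _ _
      _ = C * ‖θ‖ := by rw [← Finset.sum_mul]
  -- continuity of N
  have hlip : ∀ a b : Fin n → ℝ, |N a - N b| ≤ C * ‖a - b‖ := by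
    intro a b
    have hab : ∀ u v : Fin n → ℝ, N u - N v ≤ N (u - v) := by
      intro u v
      have := hN.2.2.2 (u - v) v
      rw [sub_add_cancel] at this
      linarith
    have hsym : N (b - a) = N (a - b) := by
      have : b - a = (-1 : ℝ) • (a - b) := by rw [neg_smul, one_smul, neg_sub]
      rw [this, hN.2.2.1]; simp
    rw [abs_sub_le_iff]
    constructor
    · exact le_trans (hab a b) (hupper _)
    · refine le_trans (hab b a) ?_
      rw [hsym]; exact hupper _
  have hNcont : Continuous N := by
    apply (LipschitzWith.of_dist_le_mul (K := C.toNNReal) (f := N) ?_).continuous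
    intro a b
    rw [Real.dist_eq, dist_eq_norm, Real.coe_toNNReal _ hCpos.le]
    exact hlip a b
  -- min on sphere
  have hsph : IsCompact (Metric.sphere (0 : Fin n → ℝ) 1) := isCompact_sphere 0 1
  have hne : (Metric.sphere (0 : Fin n → ℝ) 1).Nonempty := by
    refine ⟨fun _ => 1, ?_⟩
    rw [mem_sphere_zero_iff_norm]
    simp [pi_norm_const]
  obtain ⟨u₀, hu₀, hmin⟩ := hsph.exists_isMinOn hne hNcont.continuousOn
  have hu₀ne : u₀ ≠ 0 := by
    intro h
    rw [mem_sphere_zero_iff_norm, h] at hu₀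
    simp at hu₀
  refine ⟨N u₀, C, isnorm_pos hN hu₀ne, hCpos, fun θ => ⟨?_, hupper θ⟩⟩
  by_cases hθ : θ = 0
  · simp [hθ, isnorm_zero hN]
  · have hnθ : (0:ℝ) < ‖θ‖ := norm_pos_iff.mpr hθ
    set u : Fin n → ℝ := ‖θ‖⁻¹ • θ with hu
    have husph : u ∈ Metric.sphere (0 : Fin n → ℝ) 1 := by
      rw [mem_sphere_zero_iff_norm, hu, norm_smul]
      simp [abs_of_pos (inv_pos.mpr hnθ), inv_mul_cancel₀ hnθ.ne']
    have hθu : θ = ‖θ‖ • u := by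
      rw [hu, smul_smul, mul_inv_cancel₀ hnθ.ne', one_smul]
    have : N θ = ‖θ‖ * N u := by
      rw [hθu, hN.2.2.1, abs_of_pos hnθ]
      congr 1
      rw [← hθu]
    rw [this, mul_comm (N u₀) ‖θ‖]
    exact mul_le_mul_of_nonneg_left (hmin husph) hnθ.le
lemma psi0_bounds {n : ℕ} (hn : 0 < n) (ψ₀ : (Fin n → ℝ) → ℝ) (fψ₀ : ℝ → ℝ)
    (hψ₀c : Continuous ψ₀) (hψ₀nn : ∀ θ, 0 ≤ ψ₀ θ)
    (hψ₀pd : ∀ θ, ψ₀ θ = 0 ↔ θ = 0) (hfψ₀ : ClassKInf fψ₀)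
    (hψ₀GH : ∀ (θ : Fin n → ℝ) (r : ℝ), r ≠ 0 → fψ₀ (1 / |r|) * ψ₀ (r • θ) ≤ ψ₀ θ) :
    ∃ m M : ℝ, 0 < m ∧ 0 ≤ M ∧ ∀ θ : Fin n → ℝ, θ ≠ 0 →
      m * fψ₀ ‖θ‖ ≤ ψ₀ θ ∧ fψ₀ ‖θ‖⁻¹ * ψ₀ θ ≤ M := by
  haveI : Nonempty (Fin n) := ⟨⟨0, hn⟩⟩
  have hsph : IsCompact (Metric.sphere (0 : Fin n → ℝ) 1) := isCompact_sphere 0 1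
  have hne : (Metric.sphere (0 : Fin n → ℝ) 1).Nonempty := by
    refine ⟨fun _ => 1, ?_⟩
    rw [mem_sphere_zero_iff_norm]
    simp [pi_norm_const]
  obtain ⟨u₀, hu₀, hmin⟩ := hsph.exists_isMinOn hne hψ₀c.continuousOn
  obtain ⟨v₀, hv₀, hmax⟩ := hsph.exists_isMaxOn hne hψ₀c.continuousOn
  have hu₀ne : u₀ ≠ 0 := by
    intro h; rw [mem_sphere_zero_iff_norm, h] at hu₀; simp at hu₀
  have hm : 0 < ψ₀ u₀ :=
    lt_of_le_of_ne (hψ₀nn u₀) (fun h => hu₀ne ((hψ₀pd u₀).mp h.symm))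
  refine ⟨ψ₀ u₀, ψ₀ v₀, hm, hψ₀nn v₀, fun θ hθ => ?_⟩
  have hnθ : (0:ℝ) < ‖θ‖ := norm_pos_iff.mpr hθ
  set u : Fin n → ℝ := ‖θ‖⁻¹ • θ with hu
  have husph : u ∈ Metric.sphere (0 : Fin n → ℝ) 1 := by
    rw [mem_sphere_zero_iff_norm, hu, norm_smul]
    simp [abs_of_pos (inv_pos.mpr hnθ), inv_mul_cancel₀ hnθ.ne']
  have hθu : θ = ‖θ‖ • u := by
    rw [hu, smul_smul, mul_inv_cancel₀ hnθ.ne', one_smul]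
  constructor
  · have h1 := hψ₀GH θ (‖θ‖⁻¹) (inv_ne_zero hnθ.ne')
    rw [abs_of_pos (inv_pos.mpr hnθ), one_div, inv_inv] at h1
    calc ψ₀ u₀ * fψ₀ ‖θ‖ = fψ₀ ‖θ‖ * ψ₀ u₀ := mul_comm _ _
      _ ≤ fψ₀ ‖θ‖ * ψ₀ u :=
          mul_le_mul_of_nonneg_left (hmin husph) (kinf_nonneg hfψ₀ hnθ.le)
      _ ≤ ψ₀ θ := h1
  · have h2 := hψ₀GH u ‖θ‖ hnθ.ne'
    rw [abs_of_pos hnθ, one_div, ← hθu] at h2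
    exact le_trans h2 (hmax husph)

noncomputable def hfun (fψ₀ : ℝ → ℝ) (c M : ℝ) : ℝ → ℝ :=
  fun s => if s ≤ 0 then 0 else M / fψ₀ (c / s)

lemma hfun_zero (fψ₀ : ℝ → ℝ) (c M : ℝ) : hfun fψ₀ c M 0 = 0 := by simp [hfun]

lemma hfun_pos_eq (fψ₀ : ℝ → ℝ) (c M : ℝ) {s : ℝ} (hs : 0 < s) :
    hfun fψ₀ c M s = M / fψ₀ (c / s) := by simp [hfun, not_le.mpr hs]

lemma hfun_nonneg {fψ₀ : ℝ → ℝ} (hfψ₀ : ClassKInf fψ₀) {c M : ℝ} (hc : 0 < c)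
    (hM : 0 ≤ M) (s : ℝ) : 0 ≤ hfun fψ₀ c M s := by
  by_cases hs : s ≤ 0
  · simp [hfun, hs]
  · push_neg at hs
    rw [hfun_pos_eq _ _ _ hs]
    exact div_nonneg hM (kinf_pos hfψ₀ (div_pos hc hs)).le

lemma hfun_mono {fψ₀ : ℝ → ℝ} (hfψ₀ : ClassKInf fψ₀) {c M : ℝ} (hc : 0 < c)
    (hM : 0 ≤ M) : MonotoneOn (hfun fψ₀ c M) (Set.Ici 0) := by
  intro a ha b hb hab
  by_cases hb0 : b ≤ 0
  · have : a = b := le_antisymm hab (le_trans hb0 ha)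
    rw [this]
  · push_neg at hb0
    by_cases ha0 : a ≤ 0
    · rw [show a = 0 from le_antisymm ha0 ha, hfun_zero]
      exact hfun_nonneg hfψ₀ hc hM b
    · push_neg at ha0
      rw [hfun_pos_eq _ _ _ ha0, hfun_pos_eq _ _ _ hb0]
      have hcb : 0 < c / b := div_pos hc hb0
      have hfle : fψ₀ (c / b) ≤ fψ₀ (c / a) :=
        hfψ₀.2.2.1.monotoneOn hcb.le (div_pos hc ha0).le
          (div_le_div_of_nonneg_left hc.le ha0 hab)
      exact div_le_div_of_nonneg_left hM (kinf_pos hfψ₀ hcb) hfle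

lemma hfun_cont {fψ₀ : ℝ → ℝ} (hfψ₀ : ClassKInf fψ₀) {c M : ℝ} (hc : 0 < c)
    (hM : 0 ≤ M) : ContinuousOn (hfun fψ₀ c M) (Set.Ici 0) := by
  intro s hs
  rcases eq_or_lt_of_le (Set.mem_Ici.mp hs) with h0 | hpos
  · -- s = 0
    rw [← h0]
    unfold ContinuousWithinAt
    rw [hfun_zero]
    rw [show Set.Ici (0:ℝ) = insert 0 (Set.Ioi 0) by rw [Set.Ioi_insert],
      nhdsWithin_insert, tendsto_sup]
    constructor
    · rw [tendsto_pure_left]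
      intro U hU
      simpa [hfun_zero] using mem_of_mem_nhds hU
    · have hdiv : Tendsto (fun t : ℝ => c / t) (nhdsWithin 0 (Set.Ioi 0)) atTop := by
        simpa [div_eq_mul_inv] using tendsto_inv_nhdsGT_zero.const_mul_atTop hc
      have htend : Tendsto (fun t : ℝ => M / fψ₀ (c / t)) (nhdsWithin 0 (Set.Ioi 0))
          (nhds 0) := Tendsto.div_atTop tendsto_const_nhds (hfψ₀.2.2.2.comp hdiv)
      refine htend.congr' ?_
      filter_upwards [self_mem_nhdsWithin] with t ht
      rw [hfun_pos_eq _ _ _ (Set.mem_Ioi.mp ht)]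
  · -- s > 0
    apply ContinuousAt.continuousWithinAt
    have hca : ContinuousAt (fun t : ℝ => M / fψ₀ (c / t)) s := by
      have h1 : ContinuousAt (fun t : ℝ => c / t) s :=
        continuousAt_const.div continuousAt_id hpos.ne'
      have h2 : ContinuousAt fψ₀ (c / s) :=
        hfψ₀.1.continuousAt (Ici_mem_nhds (div_pos hc hpos))
      exact continuousAt_const.div (h2.comp h1) (kinf_pos hfψ₀ (div_pos hc hpos)).ne'
    refine hca.congr ?_
    filter_upwards [IsOpen.mem_nhds isOpen_Ioi (Set.mem_Ioi.mpr hpos)] with t ht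
    rw [hfun_pos_eq _ _ _ (Set.mem_Ioi.mp ht)]

lemma sum_upper (p : ℕ → ℝ) (hp : ∀ k, 0 ≤ p k) (l : ℝ) (hl : l ∈ Set.Ioo (0:ℝ) 1)
    (T : ℕ) (hT : 0 < T) (b : ℝ) (hb : 0 ≤ b)
    (hwin : ∀ s : ℕ, ∑ k ∈ Finset.Icc (s + 1) (s + T), p k ≤ b) :
    ∀ t : ℕ, ∑ k ∈ Finset.Icc 1 t, l ^ (t - k) * p k ≤ b / (1 - l ^ T) := by
  have hlT : l ^ T < 1 := pow_lt_one₀ hl.1.le hl.2 hT.ne'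
  have hd : 0 < 1 - l ^ T := by linarith
  intro t
  induction t using Nat.strong_induction_on with
  | _ t ih =>
    by_cases htT : t < T
    · calc ∑ k ∈ Finset.Icc 1 t, l ^ (t - k) * p k
          ≤ ∑ k ∈ Finset.Icc 1 t, p k := by
            apply Finset.sum_le_sum
            intro k _
            exact mul_le_of_le_one_left (hp k) (pow_le_one₀ hl.1.le hl.2.le)
        _ ≤ ∑ k ∈ Finset.Icc 1 T, p k := by
            apply Finset.sum_le_sum_of_subset_of_nonneg
            · exact Finset.Icc_subset_Icc_right htT.le
            · exact fun k _ _ => hp k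
        _ ≤ b := by simpa using hwin 0
        _ ≤ b / (1 - l ^ T) := by
            rw [le_div_iff₀ hd]
            nlinarith [pow_pos hl.1 T]
    · push_neg at htT
      set s := t - T with hs
      have hts : t = s + T := by omega
      have hst : s < t := by omega
      have hsplit : (∑ k ∈ Finset.Ioc 0 s, l ^ (t - k) * p k) +
          ∑ k ∈ Finset.Ioc s t, l ^ (t - k) * p k =
          ∑ k ∈ Finset.Ioc 0 t, l ^ (t - k) * p k :=
        Finset.sum_Ioc_consecutive _ (Nat.zero_le s) (by omega)
      have hIcc : ∀ u v : ℕ, Finset.Icc (u + 1) v = Finset.Ioc u v := by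
        intro u v; rw [← Finset.Icc_add_one_left_eq_Ioc]
      have e1 : ∑ k ∈ Finset.Icc 1 t, l ^ (t - k) * p k
          = ∑ k ∈ Finset.Ioc 0 t, l ^ (t - k) * p k := by
        rw [← hIcc 0 t]
      rw [e1, ← hsplit]
      have h1 : ∑ k ∈ Finset.Ioc 0 s, l ^ (t - k) * p k
          ≤ l ^ T * (b / (1 - l ^ T)) := by
        have e2 : ∑ k ∈ Finset.Ioc 0 s, l ^ (t - k) * p k
            = l ^ T * ∑ k ∈ Finset.Ioc 0 s, l ^ (s - k) * p k := by
          rw [Finset.mul_sum]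
          apply Finset.sum_congr rfl
          intro k hk
          have hks : k ≤ s := (Finset.mem_Ioc.mp hk).2
          have : t - k = T + (s - k) := by omega
          rw [this, pow_add, mul_assoc]
        rw [e2]
        apply mul_le_mul_of_nonneg_left _ (pow_pos hl.1 T).le
        have := ih s hst
        rwa [← hIcc 0 s]
      have h2 : ∑ k ∈ Finset.Ioc s t, l ^ (t - k) * p k ≤ b := by
        calc ∑ k ∈ Finset.Ioc s t, l ^ (t - k) * p k
            ≤ ∑ k ∈ Finset.Ioc s t, p k := by
              apply Finset.sum_le_sum
              intro k _
              exact mul_le_of_le_one_left (hp k) (pow_le_one₀ hl.1.le hl.2.le)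
          _ ≤ b := by
              have := hwin s
              rw [hIcc s (s + T)] at this
              rwa [hts]
      have hfinal : l ^ T * (b / (1 - l ^ T)) + b = b / (1 - l ^ T) := by
        field_simp
        ring
      linarith

lemma sum_lower (p : ℕ → ℝ) (hp : ∀ k, 0 ≤ p k) (l : ℝ) (hl : l ∈ Set.Ioo (0:ℝ) 1)
    (T : ℕ) (hT : 0 < T) (a : ℝ)
    (hwin : ∀ s : ℕ, a ≤ ∑ k ∈ Finset.Icc (s + 1) (s + T), p k) :
    ∀ t : ℕ, T ≤ t → l ^ T * a ≤ ∑ k ∈ Finset.Icc 1 t, l ^ (t - k) * p k := by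
  intro t htT
  set s := t - T with hs
  have hts : t = s + T := by omega
  calc l ^ T * a ≤ l ^ T * ∑ k ∈ Finset.Icc (s + 1) (s + T), p k :=
        mul_le_mul_of_nonneg_left (hwin s) (pow_pos hl.1 T).le
    _ = ∑ k ∈ Finset.Icc (s + 1) (s + T), l ^ T * p k := Finset.mul_sum _ _ _
    _ ≤ ∑ k ∈ Finset.Icc (s + 1) (s + T), l ^ (t - k) * p k := by
        apply Finset.sum_le_sum
        intro k hk
        have hk' := Finset.mem_Icc.mp hk
        apply mul_le_mul_of_nonneg_right _ (hp k)
        exact pow_le_pow_of_le_one hl.1.le hl.2.le (by omega)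
    _ ≤ ∑ k ∈ Finset.Icc 1 t, l ^ (t - k) * p k := by
        apply Finset.sum_le_sum_of_subset_of_nonneg
        · apply Finset.Icc_subset_Icc <;> omega
        · intro k _ _
          exact mul_nonneg (pow_pos hl.1 _).le (hp k)

/-- under PE, the weighted accumulated function G_t is sandwiched
between two time-invariant class-K∞ functions of the norm. -/
theorem stmt_6 {n : ℕ} (ψ : ℝ → ℝ) (ψ₀ : (Fin n → ℝ) → ℝ) (fψ fψ₀ : ℝ → ℝ)
    (hψc : Continuous ψ) (hψnn : ∀ e, 0 ≤ ψ e)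
    (hψpd : ∀ e, ψ e = 0 ↔ e = 0) (hψsym : ∀ e, ψ (-e) = ψ e)
    (hfψ : ClassKInf fψ)
    (hψGH : ∀ (e r : ℝ), r ≠ 0 → fψ (1 / |r|) * ψ (r * e) ≤ ψ e)
    (hψ₀c : Continuous ψ₀) (hψ₀nn : ∀ θ, 0 ≤ ψ₀ θ)
    (hψ₀pd : ∀ θ, ψ₀ θ = 0 ↔ θ = 0) (hψ₀sym : ∀ θ, ψ₀ (-θ) = ψ₀ θ)
    (hfψ₀ : ClassKInf fψ₀)
    (hψ₀GH : ∀ (θ : Fin n → ℝ) (r : ℝ), r ≠ 0 → fψ₀ (1 / |r|) * ψ₀ (r • θ) ≤ ψ₀ θ)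
    (x : ℕ → Fin n → ℝ) (N : (Fin n → ℝ) → ℝ) (hN : IsNorm N)
    (αψ αψ₀ l : ℝ) (hαψ : 0 < αψ) (hαψ₀ : 0 < αψ₀) (hl : l ∈ Set.Ioo (0 : ℝ) 1)
    (T : ℕ) (hT : 0 < T) (α β : ℝ → ℝ) (hα : ClassKInf α) (hβ : ClassKInf β)
    (hPE : ∀ (t : ℕ) (θ : Fin n → ℝ),
      α (N θ) ≤ ∑ k ∈ Finset.Icc (t + 1) (t + T), ψ (dot (x k) θ) ∧
      ∑ k ∈ Finset.Icc (t + 1) (t + T), ψ (dot (x k) θ) ≤ β (N θ))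
    (G : ℕ → (Fin n → ℝ) → ℝ)
    (hG : ∀ (t : ℕ) (θ : Fin n → ℝ),
      G t θ = αψ * ∑ k ∈ Finset.Icc 1 t, l ^ (t - k) * ψ (dot (x k) θ) +
        αψ₀ * l ^ t * ψ₀ θ) :
    ∃ g₁ g₂ : ℝ → ℝ, ClassKInf g₁ ∧ ClassKInf g₂ ∧
      ∀ (t : ℕ) (θ : Fin n → ℝ), g₁ (N θ) ≤ G t θ ∧ G t θ ≤ g₂ (N θ) := by
  have hψ0 : ψ 0 = 0 := (hψpd 0).mpr rfl
  rcases Nat.eq_zero_or_pos n with hn | hn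
  · -- trivial case n = 0
    subst hn
    refine ⟨fun s => s, fun s => s, kinf_id, kinf_id, fun t θ => ?_⟩
    have hθ : θ = 0 := funext fun i => i.elim0
    have hψ₀0 : ψ₀ θ = 0 := (hψ₀pd θ).mpr hθ
    have hd : ∀ k, dot (x k) θ = 0 := by intro k; simp [dot]
    have hGz : G t θ = 0 := by
      rw [hG]
      simp [hd, hψ0, hψ₀0]
    have hNz : N θ = 0 := by rw [hθ, isnorm_zero hN]
    rw [hGz, hNz]
    exact ⟨le_refl 0, le_refl 0⟩
  · obtain ⟨c, C, hc, hC, hequiv⟩ := isnorm_equiv hn hN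
    obtain ⟨m, M, hm, hM, hψb⟩ := psi0_bounds hn ψ₀ fψ₀ hψ₀c hψ₀nn hψ₀pd hfψ₀ hψ₀GH
    have hlT : l ^ T < 1 := pow_lt_one₀ hl.1.le hl.2 hT.ne'
    have hlTpos : 0 < l ^ T := pow_pos hl.1 T
    have hd : 0 < 1 - l ^ T := by linarith
    refine ⟨fun s => min (αψ * l ^ T * α s) (αψ₀ * l ^ T * (m * fψ₀ (s / C))),
      fun s => (αψ / (1 - l ^ T)) * β s + s + αψ₀ * hfun fψ₀ c M s, ?_, ?_, ?_⟩
    · exact kinf_min (kinf_cmul hα (mul_pos hαψ hlTpos))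
        (kinf_cmul (kinf_cmul (kinf_comp_div hfψ₀ hC) hm) (mul_pos hαψ₀ hlTpos))
    · exact kinf_add_id_mono (kinf_cmul hβ (div_pos hαψ hd)) hαψ₀.le
        (hfun_cont hfψ₀ hc hM) (hfun_zero _ _ _) (hfun_mono hfψ₀ hc hM)
    · intro t θ
      set p : ℕ → ℝ := fun k => ψ (dot (x k) θ) with hp
      have hpnn : ∀ k, 0 ≤ p k := fun k => hψnn _
      have hNθ : 0 ≤ N θ := hN.1 θ
      have hβN : 0 ≤ β (N θ) := kinf_nonneg hβ hNθ
      set S : ℝ := ∑ k ∈ Finset.Icc 1 t, l ^ (t - k) * p k with hS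
      have hSnn : 0 ≤ S :=
        Finset.sum_nonneg fun k _ => mul_nonneg (pow_pos hl.1 _).le (hpnn k)
      have hSup : S ≤ β (N θ) / (1 - l ^ T) :=
        sum_upper p hpnn l hl T hT (β (N θ)) hβN (fun s => (hPE s θ).2) t
      -- ψ₀ bounds in terms of N θ
      have hψ₀low : m * fψ₀ (N θ / C) ≤ ψ₀ θ := by
        by_cases hθ : θ = 0
        · subst hθ
          rw [isnorm_zero hN, zero_div, hfψ₀.2.1, mul_zero, (hψ₀pd 0).mpr rfl]
        · have h1 := (hψb θ hθ).1
          have hnθ : (0:ℝ) < ‖θ‖ := norm_pos_iff.mpr hθ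
          have h2 : N θ / C ≤ ‖θ‖ := by
            rw [div_le_iff₀ hC, mul_comm]
            exact (hequiv θ).2
          have h3 : fψ₀ (N θ / C) ≤ fψ₀ ‖θ‖ :=
            hfψ₀.2.2.1.monotoneOn (div_nonneg hNθ hC.le) hnθ.le h2
          calc m * fψ₀ (N θ / C) ≤ m * fψ₀ ‖θ‖ :=
                mul_le_mul_of_nonneg_left h3 hm.le
            _ ≤ ψ₀ θ := h1
      have hψ₀up : ψ₀ θ ≤ hfun fψ₀ c M (N θ) := by
        by_cases hθ : θ = 0
        · subst hθ
          rw [isnorm_zero hN, hfun_zero, (hψ₀pd 0).mpr rfl]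
        · have hNp : 0 < N θ := isnorm_pos hN hθ
          have hnθ : (0:ℝ) < ‖θ‖ := norm_pos_iff.mpr hθ
          rw [hfun_pos_eq _ _ _ hNp, le_div_iff₀ (kinf_pos hfψ₀ (div_pos hc hNp))]
          have h1 : c / N θ ≤ ‖θ‖⁻¹ := by
            rw [inv_eq_one_div, div_le_div_iff₀ hNp hnθ]
            have := (hequiv θ).1
            linarith
          have h2 : fψ₀ (c / N θ) ≤ fψ₀ ‖θ‖⁻¹ :=
            hfψ₀.2.2.1.monotoneOn (div_pos hc hNp).le (inv_pos.mpr hnθ).le h1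
          calc ψ₀ θ * fψ₀ (c / N θ) ≤ ψ₀ θ * fψ₀ ‖θ‖⁻¹ :=
                mul_le_mul_of_nonneg_left h2 (hψ₀nn θ)
            _ = fψ₀ ‖θ‖⁻¹ * ψ₀ θ := mul_comm _ _
            _ ≤ M := (hψb θ hθ).2
      constructor
      · -- lower bound
        rw [hG t θ]
        by_cases htT : T ≤ t
        · have hlow := sum_lower p hpnn l hl T hT (α (N θ))
            (fun s => (hPE s θ).1) t htT
          have h1 : αψ * l ^ T * α (N θ) ≤ αψ * S := by
            rw [mul_assoc]
            exact mul_le_mul_of_nonneg_left hlow hαψ.le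
          have h2 : 0 ≤ αψ₀ * l ^ t * ψ₀ θ := mul_nonneg (mul_nonneg hαψ₀.le (pow_pos hl.1 t).le) (hψ₀nn θ)
          calc min (αψ * l ^ T * α (N θ)) (αψ₀ * l ^ T * (m * fψ₀ (N θ / C)))
              ≤ αψ * l ^ T * α (N θ) := min_le_left _ _
            _ ≤ αψ * S + αψ₀ * l ^ t * ψ₀ θ := by linarith
        · push_neg at htT
          have hlt : l ^ T ≤ l ^ t := pow_le_pow_of_le_one hl.1.le hl.2.le htT.le
          have h1 : αψ₀ * l ^ T * (m * fψ₀ (N θ / C)) ≤ αψ₀ * l ^ T * ψ₀ θ :=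
            mul_le_mul_of_nonneg_left hψ₀low (mul_pos hαψ₀ hlTpos).le
          have h2 : αψ₀ * l ^ T * ψ₀ θ ≤ αψ₀ * l ^ t * ψ₀ θ := by
            apply mul_le_mul_of_nonneg_right _ (hψ₀nn θ)
            exact mul_le_mul_of_nonneg_left hlt hαψ₀.le
          have h3 : 0 ≤ αψ * S := mul_nonneg hαψ.le hSnn
          calc min (αψ * l ^ T * α (N θ)) (αψ₀ * l ^ T * (m * fψ₀ (N θ / C)))
              ≤ αψ₀ * l ^ T * (m * fψ₀ (N θ / C)) := min_le_right _ _
            _ ≤ αψ * S + αψ₀ * l ^ t * ψ₀ θ := by linarith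
      · -- upper bound
        rw [hG t θ]
        have h1 : αψ * S ≤ (αψ / (1 - l ^ T)) * β (N θ) := by
          have := mul_le_mul_of_nonneg_left hSup hαψ.le
          calc αψ * S ≤ αψ * (β (N θ) / (1 - l ^ T)) := this
            _ = (αψ / (1 - l ^ T)) * β (N θ) := by ring
        have hlt1 : l ^ t ≤ 1 := pow_le_one₀ hl.1.le hl.2.le
        have h2 : αψ₀ * l ^ t * ψ₀ θ ≤ αψ₀ * ψ₀ θ := by
          apply mul_le_mul_of_nonneg_right _ (hψ₀nn θ)
          nlinarith
        have h3 : αψ₀ * ψ₀ θ ≤ αψ₀ * hfun fψ₀ c M (N θ) :=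
          mul_le_mul_of_nonneg_left hψ₀up hαψ₀.le
        linarith
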